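/- Let Γ be a 3-SAT formula and p the designated literal of its Γ-transformation R_Γ. Then Γ is satisfiable if and only if p is >-R_Γ-refutable, i.e., there exists a superiority relation >' such that the theory (∅, R_Γ, >') proves −∂ p. -/

import Mathlib

namespace DL

abbrev Atom := ℕ

/-- A literal: an atom with a polarity. -/
structure Lit where
  atom : Atom
  pos : Bool
deriving DecidableEq

/-- The complement `∼p` of a literal. -/
def Lit.neg (l : Lit) : Lit := ⟨l.atom, !l.pos⟩

/-- A defeasible rule: a finite set of antecedent literals and a head literal. -/
structure Rule where
  ante : Finset Lit
  head : Lit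
deriving DecidableEq

/-- A defeasible theory: facts, defeasible rules, and a superiority relation. -/
structure DTheory where
  facts : Finset Lit
  rules : Finset Rule
  sup : Rule → Rule → Prop

/-- A superiority relation is acyclic iff its transitive closure is irreflexive. -/
def Acyclic (sup : Rule → Rule → Prop) : Prop :=
  Irreflexive (Relation.TransGen sup)

def DTheory.FactsConsistent (D : DTheory) : Prop :=
  ∀ l ∈ D.facts, l.neg ∉ D.facts

/-- Well-formedness of a defeasible theory: consistent facts, acyclic superiority
relation defined on the rules of the theory. -/
def DTheory.WellFormed (D : DTheory) : Prop :=
  D.FactsConsistent ∧ Acyclic D.sup ∧ ∀ r s, D.sup r s → r ∈ D.rules ∧ s ∈ D.rules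

/-- Proof tags: Δ, Σ, σ, ω, φ, ∂. -/
inductive Tag | delta | Sig | sgm | omg | phi | prt
deriving DecidableEq

/-- A tagged literal: a tag, a sign (`true` = `+`, `false` = `−`), and a literal. -/
abbrev TLit := Tag × Bool × Lit

/-- The proof conditions of Defeasible Logic (defeasible rules only), relative to
the preceding part `P` of a proof sequence. -/
def Cond (D : DTheory) (P : List TLit) : Tag → Bool → Lit → Prop
  | .delta, true, q => q ∈ D.facts
  | .delta, false, q => q ∉ D.facts
  | .Sig, true, q =>
      (Tag.delta, true, q) ∈ P ∨
      ∃ r ∈ D.rules, r.head = q ∧ ∀ a ∈ r.ante, (Tag.Sig, true, a) ∈ P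
  | .Sig, false, q =>
      (Tag.delta, true, q) ∉ P ∧
      ∀ r ∈ D.rules, r.head = q → ∃ a ∈ r.ante, (Tag.Sig, false, a) ∈ P
  | .sgm, true, q =>
      (Tag.delta, true, q) ∈ P ∨
      ∃ r ∈ D.rules, r.head = q ∧ (∀ a ∈ r.ante, (Tag.sgm, true, a) ∈ P) ∧
        ∀ s ∈ D.rules, s.head = q.neg →
          (∃ a ∈ s.ante, (Tag.prt, false, a) ∈ P) ∨ ¬ D.sup s r
  | .sgm, false, q =>
      (Tag.delta, true, q) ∉ P ∧
      ∀ r ∈ D.rules, r.head = q →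
        (∃ a ∈ r.ante, (Tag.sgm, false, a) ∈ P) ∨
        ∃ s ∈ D.rules, s.head = q.neg ∧ (∀ a ∈ s.ante, (Tag.prt, true, a) ∈ P) ∧ D.sup s r
  | .omg, true, q =>
      (Tag.delta, true, q) ∈ P ∨
      ∃ r ∈ D.rules, r.head = q ∧ ∀ a ∈ r.ante, (Tag.prt, true, a) ∈ P
  | .omg, false, q =>
      (Tag.delta, true, q) ∉ P ∧
      ∀ r ∈ D.rules, r.head = q → ∃ a ∈ r.ante, (Tag.prt, false, a) ∈ P
  | .phi, true, q =>
      (Tag.delta, true, q) ∈ P ∨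
      ∃ r ∈ D.rules, r.head = q ∧ (∀ a ∈ r.ante, (Tag.phi, true, a) ∈ P) ∧
        ∀ s ∈ D.rules, s.head = q.neg → ∃ a ∈ s.ante, (Tag.Sig, false, a) ∈ P
  | .phi, false, q =>
      (Tag.delta, true, q) ∉ P ∧
      ∀ r ∈ D.rules, r.head = q →
        (∃ a ∈ r.ante, (Tag.phi, false, a) ∈ P) ∨
        ∃ s ∈ D.rules, s.head = q.neg ∧ ∀ a ∈ s.ante, (Tag.Sig, true, a) ∈ P
  | .prt, true, q =>
      (Tag.delta, true, q) ∈ P ∨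
      ((Tag.delta, false, q.neg) ∈ P ∧
       (∃ r ∈ D.rules, r.head = q ∧ ∀ a ∈ r.ante, (Tag.prt, true, a) ∈ P) ∧
       ∀ s ∈ D.rules, s.head = q.neg →
         (∃ a ∈ s.ante, (Tag.prt, false, a) ∈ P) ∨
         ∃ t ∈ D.rules, t.head = q ∧ (∀ a ∈ t.ante, (Tag.prt, true, a) ∈ P) ∧ D.sup t s)
  | .prt, false, q =>
      (Tag.delta, true, q) ∉ P ∧
      ((Tag.delta, true, q.neg) ∈ P ∨
       (∀ r ∈ D.rules, r.head = q → ∃ a ∈ r.ante, (Tag.prt, false, a) ∈ P) ∨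
       ∃ s ∈ D.rules, s.head = q.neg ∧ (∀ a ∈ s.ante, (Tag.prt, true, a) ∈ P) ∧
         ∀ t ∈ D.rules, t.head = q →
           (∃ a ∈ t.ante, (Tag.prt, false, a) ∈ P) ∨ ¬ D.sup t s)

/-- A proof (derivation) is a finite sequence of tagged literals each of which
satisfies the proof condition relative to the preceding part of the sequence. -/
inductive ValidProof (D : DTheory) : List TLit → Prop
  | nil : ValidProof D []
  | snoc {P : List TLit} {t : Tag} {s : Bool} {q : Lit} :
      ValidProof D P → Cond D P t s q → ValidProof D (P ++ [(t, s, q)])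

/-- `D ⊢ ±# q`: some valid proof in `D` contains the tagged literal. -/
def Proves (D : DTheory) (t : Tag) (s : Bool) (q : Lit) : Prop :=
  ∃ P, ValidProof D P ∧ (t, s, q) ∈ P

/-- A theory is consistent iff it never defeasibly proves both a literal and
its complement. -/
def Consistent (D : DTheory) : Prop :=
  ∀ p : Lit, ¬ (Proves D .prt true p ∧ Proves D .prt true p.neg)

/-- `a` depends on `b` iff `b = a`, or for every rule for `a` either `b` is an
antecedent or some antecedent depends on `b` (least such relation,
impredicatively encoded). -/
def DependsOn (D : DTheory) (a b : Lit) : Prop :=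
  ∀ S : Lit → Lit → Prop,
    (∀ x, S x x) →
    (∀ x y, (∀ r ∈ D.rules, r.head = x → y ∈ r.ante ∨ ∃ c ∈ r.ante, S c y) → S x y) →
    S a b

/-- `p` is ∂-unreachable iff every rule for `p` either has two antecedents
depending on complementary literals or has a ∂-unreachable antecedent
(least such predicate, impredicatively encoded). -/
def Unreachable (D : DTheory) (p : Lit) : Prop :=
  ∀ S : Lit → Prop,
    (∀ x, (∀ r ∈ D.rules, r.head = x →
        (∃ l : Lit, ∃ a ∈ r.ante, ∃ b ∈ r.ante, DependsOn D a l ∧ DependsOn D b l.neg) ∨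
        ∃ d ∈ r.ante, S d) → S x) →
    S p

/-- The literal `p` appears in the theory `D` (its atom occurs in `D`). -/
def AppearsIn (p : Lit) (D : DTheory) : Prop :=
  (∃ l ∈ D.facts, l.atom = p.atom) ∨
  ∃ r ∈ D.rules, r.head.atom = p.atom ∨ ∃ l ∈ r.ante, l.atom = p.atom

/-- Positive part of the belief set of a defeasible theory. -/
def BSplus (D : DTheory) : Set Lit := {p | AppearsIn p D ∧ Proves D .prt true p}

/-- Negative part of the belief set of a defeasible theory. -/
def BSminus (D : DTheory) : Set Lit := {p | AppearsIn p D ∧ Proves D .prt false p}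

/-- The belief set of a defeasible theory. -/
def BS (D : DTheory) : Set Lit := BSplus D ∪ BSminus D

/-- Edge of the atom dependency graph: from atom `a` to atom `b` whenever some
rule has head with atom `b` and an antecedent literal with atom `a`. -/
def AtomEdge (D : DTheory) (a b : Atom) : Prop :=
  ∃ r ∈ D.rules, r.head.atom = b ∧ ∃ l ∈ r.ante, l.atom = a

/-- A theory is decisive iff every literal appearing in it is defeasibly
provable or defeasibly refuted. -/
def Decisive (D : DTheory) : Prop :=
  ∀ p : Lit, AppearsIn p D → Proves D .prt true p ∨ Proves D .prt false p

end DL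


namespace DL

/-- The rule set `R_Γ` of the Γ-transformation of a 3-SAT formula
`Γ = ∧ᵢ (aᵢ¹ ∨ aᵢ² ∨ aᵢ³)`, with fresh atoms `c i` and `p`. -/
def gammaRules (n : ℕ) (Γ : Fin n → Fin 3 → Lit) (c : Fin n → Atom) (p : Atom) :
    Finset Rule :=
  (Finset.univ.image fun ij : Fin n × Fin 3 => (⟨∅, Γ ij.1 ij.2⟩ : Rule)) ∪
  (Finset.univ.image fun ij : Fin n × Fin 3 =>
    (⟨{Γ ij.1 ij.2}, ⟨c ij.1, true⟩⟩ : Rule)) ∪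
  (Finset.univ.image fun i : Fin n => (⟨∅, ⟨c i, false⟩⟩ : Rule)) ∪
  (Finset.univ.image fun i : Fin n => (⟨{⟨c i, false⟩}, ⟨p, true⟩⟩ : Rule))

/-- Freshness of the atoms `c i` and `p` with respect to Γ. -/
def GammaFresh (n : ℕ) (Γ : Fin n → Fin 3 → Lit) (c : Fin n → Atom) (p : Atom) : Prop :=
  Function.Injective c ∧ (∀ i, c i ≠ p) ∧
  ∀ i j, (Γ i j).atom ≠ p ∧ ∀ k, (Γ i j).atom ≠ c k

/-- Satisfiability of the 3-SAT formula Γ. -/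
def GammaSat (n : ℕ) (Γ : Fin n → Fin 3 → Lit) : Prop :=
  ∃ I : Atom → Bool, ∀ i : Fin n, ∃ j : Fin 3, I (Γ i j).atom = (Γ i j).pos

end DL

namespace DL

lemma mem_gammaRules {n : ℕ} {Γ : Fin n → Fin 3 → Lit} {c : Fin n → Atom} {p : Atom}
    {r : Rule} : r ∈ gammaRules n Γ c p ↔
      (∃ i j, r = ⟨∅, Γ i j⟩) ∨ (∃ i j, r = ⟨{Γ i j}, ⟨c i, true⟩⟩) ∨
      (∃ i, r = ⟨∅, ⟨c i, false⟩⟩) ∨ (∃ i, r = ⟨{⟨c i, false⟩}, ⟨p, true⟩⟩) := by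
  simp [gammaRules, Finset.mem_union, Finset.mem_image, Prod.exists, eq_comm, or_assoc]

lemma no_delta {D : DTheory} (hF : D.facts = ∅) :
    ∀ {P}, ValidProof D P → ∀ q, (Tag.delta, true, q) ∉ P := by
  intro P h
  induction h with
  | nil => simp
  | snoc hP hC ih =>
    intro q hq
    rcases List.mem_append.1 hq with h | h
    · exact ih q h
    · simp at h
      obtain ⟨ht, hs, hqq⟩ := h
      subst ht; subst hs; subst hqq
      simp only [Cond, hF] at hC
      exact absurd hC (Finset.notMem_empty q)

lemma cond_of_mem {D : DTheory} :
    ∀ {P}, ValidProof D P → ∀ {t s q}, (t, s, q) ∈ P →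
      ∃ P', ValidProof D P' ∧ Cond D P' t s q ∧ ∀ x ∈ P', x ∈ P := by
  intro P h
  induction h with
  | nil => simp
  | snoc hP hC ih =>
    intro t s q hq
    rcases List.mem_append.1 hq with h | h
    · obtain ⟨P', h1, h2, h3⟩ := ih h
      exact ⟨P', h1, h2, fun x hx => List.mem_append.2 (Or.inl (h3 x hx))⟩
    · simp at h
      obtain ⟨ht, hs, hqq⟩ := h
      subst ht; subst hs; subst hqq
      exact ⟨_, hP, hC, fun x hx => List.mem_append.2 (Or.inl hx)⟩

end DL
namespace DL

@[simp] lemma Lit.neg_neg (l : Lit) : l.neg.neg = l := by simp [Lit.neg]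

lemma not_both {D : DTheory} (hF : D.facts = ∅) (hA : Acyclic D.sup) {P}
    (hP : ValidProof D P) {q : Lit}
    (hq : ∀ r ∈ D.rules, (r.head = q → r = ⟨∅, q⟩) ∧ (r.head = q.neg → r = ⟨∅, q.neg⟩))
    (h1 : (Tag.prt, true, q) ∈ P) (h2 : (Tag.prt, true, q.neg) ∈ P) : False := by
  obtain ⟨P₁, v1, c1, s1⟩ := cond_of_mem hP h1
  obtain ⟨P₂, v2, c2, s2⟩ := cond_of_mem hP h2
  rcases c1 with h | ⟨-, ⟨r, hr, hrh, -⟩, hatt⟩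
  · exact no_delta hF v1 q h
  rcases c2 with h | ⟨-, ⟨r', hr', hr'h, -⟩, hatt'⟩
  · exact no_delta hF v2 q.neg h
  have hre : r = ⟨∅, q⟩ := (hq r hr).1 hrh
  have hr'e : r' = ⟨∅, q.neg⟩ := (hq r' hr').2 hr'h
  subst hre; subst hr'e
  rcases hatt _ hr' rfl with ⟨a, ha, -⟩ | ⟨t, ht, hth, -, hsup⟩
  · simp at ha
  have h2h : ∀ s ∈ D.rules, s.head = q.neg.neg → _ := hatt'
  rcases hatt' _ hr (by simp) with ⟨a, ha, -⟩ | ⟨t', ht', ht'h, -, hsup'⟩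
  · simp at ha
  have hte : t = ⟨∅, q⟩ := (hq t ht).1 hth
  have ht'e : t' = ⟨∅, q.neg⟩ := (hq t' ht').2 ht'h
  subst hte; subst ht'e
  exact hA _ (Relation.TransGen.head hsup (Relation.TransGen.single hsup'))

section Char
variable {n : ℕ} {Γ : Fin n → Fin 3 → Lit} {c : Fin n → Atom} {p : Atom}

lemma head_p_true (hf : GammaFresh n Γ c p) {r} (hr : r ∈ gammaRules n Γ c p)
    (h : r.head = ⟨p, true⟩) : ∃ i, r = ⟨{⟨c i, false⟩}, ⟨p, true⟩⟩ := by
  rcases mem_gammaRules.1 hr with ⟨i, j, rfl⟩ | ⟨i, j, rfl⟩ | ⟨i, rfl⟩ | ⟨i, rfl⟩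
  · exact absurd (congrArg Lit.atom h) (hf.2.2 i j).1
  · exact absurd (congrArg Lit.atom h) (hf.2.1 i)
  · exact absurd (congrArg Lit.atom h) (hf.2.1 i)
  · exact ⟨i, rfl⟩

lemma head_p_false (hf : GammaFresh n Γ c p) {r} (hr : r ∈ gammaRules n Γ c p)
    (h : r.head = ⟨p, false⟩) : False := by
  rcases mem_gammaRules.1 hr with ⟨i, j, rfl⟩ | ⟨i, j, rfl⟩ | ⟨i, rfl⟩ | ⟨i, rfl⟩
  · exact absurd (congrArg Lit.atom h) (hf.2.2 i j).1
  · exact absurd (congrArg Lit.atom h) (hf.2.1 i)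
  · exact absurd (congrArg Lit.atom h) (hf.2.1 i)
  · simpa using congrArg Lit.pos h

lemma head_c_true (hf : GammaFresh n Γ c p) {r} (hr : r ∈ gammaRules n Γ c p) {i}
    (h : r.head = ⟨c i, true⟩) : ∃ j, r = ⟨{Γ i j}, ⟨c i, true⟩⟩ := by
  rcases mem_gammaRules.1 hr with ⟨l, j, rfl⟩ | ⟨l, j, rfl⟩ | ⟨l, rfl⟩ | ⟨l, rfl⟩
  · exact absurd (congrArg Lit.atom h) ((hf.2.2 l j).2 i)
  · obtain rfl : l = i := hf.1 (congrArg Lit.atom h)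
    exact ⟨j, rfl⟩
  · simpa using congrArg Lit.pos h
  · exact absurd (congrArg Lit.atom h).symm (hf.2.1 i)

lemma head_c_false (hf : GammaFresh n Γ c p) {r} (hr : r ∈ gammaRules n Γ c p) {i}
    (h : r.head = ⟨c i, false⟩) : r = ⟨∅, ⟨c i, false⟩⟩ := by
  rcases mem_gammaRules.1 hr with ⟨l, j, rfl⟩ | ⟨l, j, rfl⟩ | ⟨l, rfl⟩ | ⟨l, rfl⟩
  · exact absurd (congrArg Lit.atom h) ((hf.2.2 l j).2 i)
  · simpa using congrArg Lit.pos h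
  · obtain rfl : l = i := hf.1 (congrArg Lit.atom h)
    rfl
  · exact absurd (congrArg Lit.atom h).symm (hf.2.1 i)

lemma head_gamma_atom (hf : GammaFresh n Γ c p) {r} (hr : r ∈ gammaRules n Γ c p)
    {i j} (h : r.head.atom = (Γ i j).atom) : r = ⟨∅, r.head⟩ := by
  rcases mem_gammaRules.1 hr with ⟨l, k, rfl⟩ | ⟨l, k, rfl⟩ | ⟨l, rfl⟩ | ⟨l, rfl⟩
  · rfl
  · exact absurd h.symm ((hf.2.2 i j).2 l)
  · rfl
  · exact absurd h.symm (hf.2.2 i j).1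

end Char
end DL
open DL in
/-- Γ is satisfiable iff the designated literal `p` of its Γ-transformation is
`>`-`R_Γ`-refutable. -/
theorem stmt7 (n : ℕ) (Γ : Fin n → Fin 3 → Lit) (c : Fin n → Atom) (p : Atom)
    (hf : GammaFresh n Γ c p) :
    GammaSat n Γ ↔
      ∃ sup : Rule → Rule → Prop,
        (⟨∅, gammaRules n Γ c p, sup⟩ : DTheory).WellFormed ∧
        Proves ⟨∅, gammaRules n Γ c p, sup⟩ .prt false ⟨p, true⟩ := by
  constructor
  · rintro ⟨I, hI⟩
    choose j hj using hI
    set R := gammaRules n Γ c p with hRdef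
    set sup : Rule → Rule → Prop := fun r s =>
      r ∈ R ∧ s ∈ R ∧ r.ante = ∅ ∧ s.ante = ∅ ∧ s.head = r.head.neg ∧
        I r.head.atom = r.head.pos with hsupdef
    set D : DTheory := ⟨∅, R, sup⟩ with hDdef
    have hF : D.facts = ∅ := rfl
    have hnostep : ∀ a b, sup a b → ∀ u, ¬ sup b u := by
      intro a b hab u hbu
      have h1 : I a.head.atom = a.head.pos := hab.2.2.2.2.2
      have h2 : I b.head.atom = b.head.pos := hbu.2.2.2.2.2
      have h3 : b.head = a.head.neg := hab.2.2.2.2.1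
      rw [h3] at h2
      simp only [Lit.neg] at h2
      rw [h1] at h2
      simp at h2
    have hwf : D.WellFormed := by
      refine ⟨by intro l hl; simp [hF] at hl, ?_, fun r s h => ⟨h.1, h.2.1⟩⟩
      have h3 : ∀ a b, Relation.TransGen sup a b → sup a b := by
        intro a b h
        induction h with
        | single h => exact h
        | tail hab hbc ih => exact absurd hbc (hnostep _ _ ih _)
      intro a h
      have hs := h3 a a h
      have := congrArg Lit.pos hs.2.2.2.2.1
      simp [Lit.neg] at this
    -- membership facts
    have memFact : ∀ i, (⟨∅, Γ i (j i)⟩ : Rule) ∈ R :=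
      fun i => mem_gammaRules.2 (Or.inl ⟨i, j i, rfl⟩)
    have memC : ∀ i, (⟨{Γ i (j i)}, ⟨c i, true⟩⟩ : Rule) ∈ R :=
      fun i => mem_gammaRules.2 (Or.inr (Or.inl ⟨i, j i, rfl⟩))
    -- build the proof sequence
    have build : ∀ L : List (Fin n), ∃ P, ValidProof D P ∧
        ∀ i ∈ L, (Tag.prt, false, (⟨c i, false⟩ : Lit)) ∈ P := by
      intro L
      induction L with
      | nil => exact ⟨[], .nil, by simp⟩
      | cons i L ih =>
        obtain ⟨P, vP, hmemP⟩ := ih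
        set q : Lit := Γ i (j i) with hq
        -- step 1 : (δ, false, q.neg)
        have v1 : ValidProof D (P ++ [(Tag.delta, false, q.neg)]) :=
          vP.snoc (by simp [Cond, hF])
        -- step 2 : (∂, true, q)
        have c2 : Cond D (P ++ [(Tag.delta, false, q.neg)]) .prt true q := by
          refine Or.inr ⟨by simp, ⟨⟨∅, q⟩, memFact i, rfl, by simp⟩, ?_⟩
          intro s hs hsh
          have hse : s = ⟨∅, q.neg⟩ := by
            have := head_gamma_atom hf hs (i := i) (j := j i)
              (by rw [hsh]; rfl)
            rw [this, hsh]
          subst hse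
          refine Or.inr ⟨⟨∅, q⟩, memFact i, rfl, by simp, ?_⟩
          exact ⟨memFact i, hs, rfl, rfl, rfl, hj i⟩
        have v2 : ValidProof D (P ++ [(Tag.delta, false, q.neg)] ++ [(Tag.prt, true, q)]) :=
          v1.snoc c2
        -- step 3 : (∂, false, ⟨c i, false⟩)
        have c3 : Cond D (P ++ [(Tag.delta, false, q.neg)] ++ [(Tag.prt, true, q)])
            .prt false ⟨c i, false⟩ := by
          refine ⟨no_delta hF v2 _, Or.inr (Or.inr ?_)⟩
          refine ⟨⟨{q}, ⟨c i, true⟩⟩, memC i, rfl, by simp, ?_⟩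
          intro t ht hth
          refine Or.inr fun hsup => ?_
          have := hsup.2.2.2.1
          simp at this
        have v3 := v2.snoc c3
        refine ⟨_, v3, ?_⟩
        intro i' hi'
        rcases List.mem_cons.1 hi' with rfl | hi'
        · simp
        · have := hmemP i' hi'
          simp [this]
    obtain ⟨P, vP, hmemP⟩ := build (List.finRange n)
    refine ⟨sup, hwf, P ++ [(Tag.prt, false, ⟨p, true⟩)], vP.snoc ?_, by simp⟩
    refine ⟨no_delta hF vP _, Or.inr (Or.inl ?_)⟩
    intro r hr hrh
    obtain ⟨i, rfl⟩ := head_p_true hf hr hrh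
    exact ⟨⟨c i, false⟩, by simp, hmemP i (List.mem_finRange i)⟩
  · rintro ⟨sup, ⟨-, hA, -⟩, P, hP, hmemP⟩
    set R := gammaRules n Γ c p with hRdef
    set D : DTheory := ⟨∅, R, sup⟩ with hDdef
    have hF : D.facts = ∅ := rfl
    -- for every i, some +∂ (Γ i j) appears in P
    have key : ∀ i : Fin n, ∃ k, (Tag.prt, true, Γ i k) ∈ P := by
      intro i
      obtain ⟨P₁, v1, c1, s1⟩ := cond_of_mem hP hmemP
      obtain ⟨-, hd⟩ := c1
      rcases hd with h | h | ⟨s, hs, hsh, -, -⟩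
      · exact absurd h (no_delta hF v1 _)
      · -- every rule for ⟨p,true⟩ has a refuted antecedent
        obtain ⟨a, ha, hpa⟩ := h ⟨{⟨c i, false⟩}, ⟨p, true⟩⟩
          (mem_gammaRules.2 (Or.inr (Or.inr (Or.inr ⟨i, rfl⟩)))) rfl
        have ha' : a = ⟨c i, false⟩ := by simpa using ha
        subst ha'
        have hmem2 : (Tag.prt, false, (⟨c i, false⟩ : Lit)) ∈ P := s1 _ hpa
        obtain ⟨P₂, v2, c2, s2⟩ := cond_of_mem hP hmem2
        obtain ⟨-, hd2⟩ := c2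
        rcases hd2 with h2 | h2 | ⟨s, hs, hsh, hante, -⟩
        · exact absurd h2 (no_delta hF v2 _)
        · obtain ⟨a, ha, -⟩ := h2 ⟨∅, ⟨c i, false⟩⟩
            (mem_gammaRules.2 (Or.inr (Or.inr (Or.inl ⟨i, rfl⟩)))) rfl
          simp at ha
        · obtain ⟨k, rfl⟩ := head_c_true hf hs (i := i) (by rw [hsh]; rfl)
          exact ⟨k, s2 _ (hante (Γ i k) (by simp))⟩
      · exact absurd (head_p_false hf hs (by rw [hsh]; rfl)) (fun h => h)
    choose k hk using key
    classical
    refine ⟨fun a => decide ((Tag.prt, true, (⟨a, true⟩ : Lit)) ∈ P), fun i => ⟨k i, ?_⟩⟩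
    have hq : ∀ r ∈ D.rules,
        (r.head = Γ i (k i) → r = ⟨∅, Γ i (k i)⟩) ∧
        (r.head = (Γ i (k i)).neg → r = ⟨∅, (Γ i (k i)).neg⟩) := by
      intro r hr
      constructor
      · intro hh
        have := head_gamma_atom hf hr (i := i) (j := k i) (by rw [hh])
        rw [this, hh]
      · intro hh
        have := head_gamma_atom hf hr (i := i) (j := k i) (by rw [hh]; rfl)
        rw [this, hh]
    rcases hpos : (Γ i (k i)).pos with _ | _
    · -- pos = false : show decide = false
      have hne : (Tag.prt, true, (⟨(Γ i (k i)).atom, true⟩ : Lit)) ∉ P := by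
        intro hmem'
        have hlit : (⟨(Γ i (k i)).atom, true⟩ : Lit) = (Γ i (k i)).neg := by
          simp [Lit.neg, hpos]
        rw [hlit] at hmem'
        exact not_both hF hA hP hq (hk i) hmem'
      simp [hne]
    · -- pos = true
      have hlit : (⟨(Γ i (k i)).atom, true⟩ : Lit) = Γ i (k i) := by
        cases hG : Γ i (k i)
        simp_all
      show decide ((Tag.prt, true, (⟨(Γ i (k i)).atom, true⟩ : Lit)) ∈ P) = true
      simp [hlit, hk i]
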